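/- arXiv:1906.07416 — 2 statements merged into one kernel-verified Lean document; each statement's English description precedes it below -/
import Mathlib

section
/- Suppose e1, e2 : ℝ → ℝ are differentiable with e1' = -c1·e1 + e2 and e2' = -c2·e2 - e1 for constants c1, c2 > 0. Then V(t) = (e1(t)² + e2(t)²)/2 satisfies V'(t) = -c1·e1(t)² - c2·e2(t)² ≤ 0 for all t, and e1(t)² + e2(t)² → 0 as t → ∞. -/
open Filter

theorem backstepping_lyapunov (c1 c2 : ℝ) (hc1 : 0 < c1) (hc2 : 0 < c2)
    (e1 e2 : ℝ → ℝ)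
    (h1 : ∀ t, HasDerivAt e1 (-c1 * e1 t + e2 t) t)
    (h2 : ∀ t, HasDerivAt e2 (-c2 * e2 t - e1 t) t) :
    (∀ t, HasDerivAt (fun s => (e1 s ^ 2 + e2 s ^ 2) / 2)
        (-c1 * e1 t ^ 2 - c2 * e2 t ^ 2) t ∧
        -c1 * e1 t ^ 2 - c2 * e2 t ^ 2 ≤ 0) ∧
    Tendsto (fun t => e1 t ^ 2 + e2 t ^ 2) atTop (nhds 0) := by
  set c := min c1 c2 with hc
  have hcpos : 0 < c := lt_min hc1 hc2
  -- derivative of W = e1^2 + e2^2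
  have hW : ∀ t, HasDerivAt (fun s => e1 s ^ 2 + e2 s ^ 2)
      (-(2*c1) * e1 t ^ 2 - (2*c2) * e2 t ^ 2) t := by
    intro t
    have := (((h1 t).fun_pow 2).add ((h2 t).fun_pow 2))
    exact this.congr_deriv (by ring)
  constructor
  · intro t
    constructor
    · have := (hW t).div_const 2
      exact this.congr_deriv (by ring)
    · have a1 : 0 ≤ c1 * e1 t ^ 2 := by positivity
      have a2 : 0 ≤ c2 * e2 t ^ 2 := by positivity
      nlinarith
  · -- g t = W t * exp (2 c t) is antitone
    set W : ℝ → ℝ := fun s => e1 s ^ 2 + e2 s ^ 2 with hWdef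
    set g : ℝ → ℝ := fun s => W s * Real.exp (2 * c * s) with hgdef
    have hg : ∀ t, HasDerivAt g
        ((-(2*c1) * e1 t ^ 2 - (2*c2) * e2 t ^ 2 + 2 * c * W t) * Real.exp (2 * c * t)) t := by
      intro t
      have hexp : HasDerivAt (fun s => Real.exp (2 * c * s)) (2 * c * Real.exp (2 * c * t)) t := by
        have := ((hasDerivAt_id t).const_mul (2 * c)).exp
        simpa [mul_comm] using this
      have := (hW t).fun_mul hexp
      exact this.congr_deriv (by ring)
    have hg' : ∀ t, deriv g t ≤ 0 := by
      intro t
      rw [(hg t).deriv]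
      apply mul_nonpos_of_nonpos_of_nonneg _ (Real.exp_nonneg _)
      have hle1 : c ≤ c1 := min_le_left _ _
      have hle2 : c ≤ c2 := min_le_right _ _
      have a1 : 0 ≤ e1 t ^ 2 := sq_nonneg _
      have a2 : 0 ≤ e2 t ^ 2 := sq_nonneg _
      simp only [hWdef]
      nlinarith
    have hanti : Antitone g :=
      antitone_of_deriv_nonpos (fun t => (hg t).differentiableAt) hg'
    have hbound : ∀ t, 0 ≤ t → W t ≤ g 0 * Real.exp (-(2 * c) * t) := by
      intro t ht
      have := hanti ht
      have hW' : W t = g t * Real.exp (-(2 * c) * t) := by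
        simp [hgdef, mul_assoc, ← Real.exp_add]
      rw [hW']
      exact mul_le_mul_of_nonneg_right this (Real.exp_nonneg _)
    have hto : Tendsto (fun t => g 0 * Real.exp (-(2 * c) * t)) atTop (nhds 0) := by
      have : Tendsto (fun t => g 0 * Real.exp (-(2 * c) * t)) atTop (nhds (g 0 * 0)) := by
        apply Tendsto.const_mul
        apply Real.tendsto_exp_atBot.comp
        exact tendsto_id.const_mul_atTop_of_neg (by linarith)
      simpa using this
    refine tendsto_of_tendsto_of_tendsto_of_le_of_le' tendsto_const_nhds hto ?_ ?_
    · filter_upwards with t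
      positivity
    · filter_upwards [eventually_ge_atTop 0] with t ht using hbound t ht
end

section
/- Let x1, x2 : ℝ → ℝ be differentiable with x1' = x2 and x2' = -k1·x2 - k1·k2·sat((x1 - r_c)/k3), where k1, k2, k3, r_c > 0. Then V3(t) = k1·k2·∫_{r_c}^{x1(t)} sat((τ - r_c)/k3) dτ + x2(t)²/2 satisfies V3'(t) = -k1·x2(t)² ≤ 0 for all t. -/
noncomputable def sat (η : ℝ) : ℝ := if |η| < 1 then η else Real.sign η

lemma sat_eq (η : ℝ) : sat η = max (-1) (min 1 η) := by
  unfold sat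
  rcases lt_or_ge |η| 1 with h | h
  · rw [abs_lt] at h
    rw [if_pos (abs_lt.2 h), min_eq_right h.2.le, max_eq_right h.1.le]
  · rw [if_neg (not_lt.2 h)]
    rcases le_abs'.1 h with h' | h'
    · have hneg : η < 0 := by linarith
      rw [Real.sign_of_neg hneg, min_eq_right (by linarith), max_eq_left (by linarith)]
    · have hpos : 0 < η := by linarith
      rw [Real.sign_of_pos hpos, min_eq_left h', max_eq_right (by linarith)]

lemma sat_continuous : Continuous sat := by
  have : sat = fun η => max (-1) (min 1 η) := funext sat_eq
  rw [this]
  fun_prop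

theorem V3_decrease (k1 k2 k3 r_c : ℝ)
    (hk1 : 0 < k1) (hk2 : 0 < k2) (hk3 : 0 < k3) (hr : 0 < r_c)
    (x1 x2 : ℝ → ℝ)
    (h1 : ∀ t, HasDerivAt x1 (x2 t) t)
    (h2 : ∀ t, HasDerivAt x2 (-k1 * x2 t - k1 * k2 * sat ((x1 t - r_c) / k3)) t) :
    ∀ t, HasDerivAt
        (fun s => k1 * k2 * (∫ τ in r_c..(x1 s), sat ((τ - r_c) / k3)) + x2 s ^ 2 / 2)
        (-k1 * x2 t ^ 2) t ∧ -k1 * x2 t ^ 2 ≤ 0 := by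
  intro t
  constructor
  · have hg : Continuous (fun τ : ℝ => sat ((τ - r_c) / k3)) := by
      apply sat_continuous.comp; fun_prop
    have hF : HasDerivAt (fun y => ∫ τ in r_c..y, sat ((τ - r_c) / k3))
        (sat ((x1 t - r_c) / k3)) (x1 t) :=
      intervalIntegral.integral_hasDerivAt_right
        (hg.intervalIntegrable _ _) (hg.stronglyMeasurableAtFilter _ _)
        hg.continuousAt
    have hFx : HasDerivAt (fun s => ∫ τ in r_c..(x1 s), sat ((τ - r_c) / k3))
        (sat ((x1 t - r_c) / k3) * x2 t) t := hF.comp t (h1 t)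
    have hx2sq : HasDerivAt (fun s => x2 s ^ 2 / 2)
        (x2 t * (-k1 * x2 t - k1 * k2 * sat ((x1 t - r_c) / k3))) t := by
      have := ((h2 t).pow 2).div_const 2
      exact this.congr_deriv (by ring)
    have := (hFx.const_mul (k1 * k2)).add hx2sq
    exact this.congr_deriv (by ring)
  · nlinarith [sq_nonneg (x2 t)]
end
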